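/- Every doubly-connected graph G of order n ≥ 6 such that both G and its complement Ḡ have diameter 2 contains a locating set of cardinality n − 4. -/

import Mathlib

open SimpleGraph

/-- `S` is a locating set of `G`: every vertex outside `S` is at finite distance from
some vertex of `S`, and any two distinct vertices have distinct vectors of distances
to `S`. -/
def IsLocatingSet {V : Type*} (G : SimpleGraph V) (S : Set V) : Prop :=
  (∀ v ∉ S, ∃ x ∈ S, G.edist v x ≠ ⊤) ∧
  ∀ u v : V, u ≠ v → ∃ x ∈ S, G.edist u x ≠ G.edist v x

/-- The location number (metric dimension) `β(G)`: the minimum cardinality of a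
locating set of `G`. -/
noncomputable def locNum {V : Type*} [Fintype V] (G : SimpleGraph V) : ℕ :=
  sInf {k | ∃ S : Set V, IsLocatingSet G S ∧ S.ncard = k}


/-- In a graph of extended diameter 2, any two distinct non-adjacent vertices have a
common neighbor. -/
lemma exists_common_nbr_of_ediam_two {V : Type*} (G : SimpleGraph V) (hd : G.ediam = 2)
    {u v : V} (hne : u ≠ v) (hna : ¬ G.Adj u v) : ∃ w, G.Adj u w ∧ G.Adj v w := by
  have hle : G.edist u v ≤ 2 := hd ▸ G.edist_le_ediam
  have htop : G.edist u v ≠ ⊤ := by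
    intro h
    rw [h] at hle
    exact absurd hle (by simp)
  obtain ⟨n, hn⟩ := (WithTop.ne_top_iff_exists).mp htop
  have h0 : G.edist u v ≠ 0 := fun h => hne (SimpleGraph.edist_eq_zero_iff.mp h)
  have h1 : G.edist u v ≠ 1 := fun h => hna (SimpleGraph.edist_eq_one_iff_adj.mp h)
  have hn2 : G.edist u v = (2 : ℕ) := by
    rcases n with _ | _ | _ | m
    · exact absurd (by exact_mod_cast hn.symm) h0
    · exact absurd (by exact_mod_cast hn.symm) h1
    · exact hn.symm
    · exfalso
      rw [← hn] at hle
      have : ((m + 3 : ℕ) : ℕ∞) ≤ ((2 : ℕ) : ℕ∞) := by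
        have h3 : m + 1 + 1 + 1 = m + 3 := rfl
        rw [h3] at hle
        exact hle
      have := (Nat.cast_le (α := ℕ∞)).mp this
      omega
  obtain ⟨p, hp⟩ := SimpleGraph.exists_walk_of_edist_eq_coe hn2
  cases p with
  | nil => simp at hp
  | cons h q =>
    cases q with
    | nil => simp at hp
    | cons h2 q2 =>
      have hq2 : q2.length = 0 := by
        simp only [SimpleGraph.Walk.length_cons] at hp
        omega
      have heq := SimpleGraph.Walk.eq_of_length_eq_zero hq2
      subst heq
      exact ⟨_, h, h2.symm⟩


/-- Core combinatorial lemma: a "cell pair" exists. -/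
lemma exists_cell_pair {V : Type*} [Fintype V] (G : SimpleGraph V)
    (F1 : ∀ ⦃u v : V⦄, u ≠ v → ¬ G.Adj u v → ∃ w, G.Adj u w ∧ G.Adj v w)
    (F2 : ∀ ⦃u v : V⦄, G.Adj u v → ∃ w, w ≠ u ∧ w ≠ v ∧ ¬ G.Adj u w ∧ ¬ G.Adj v w)
    (hne : ∃ u v : V, u ≠ v ∧ ¬ G.Adj u v)
    (hn : 6 ≤ Fintype.card V) :
    ∃ w₁ w₂ p q r s : V,
      (p ≠ w₁ ∧ p ≠ w₂ ∧ G.Adj w₁ p ∧ G.Adj w₂ p) ∧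
      (q ≠ w₂ ∧ G.Adj w₁ q ∧ ¬ G.Adj w₂ q) ∧
      (r ≠ w₁ ∧ G.Adj w₂ r ∧ ¬ G.Adj w₁ r) ∧
      (s ≠ w₁ ∧ s ≠ w₂ ∧ ¬ G.Adj w₁ s ∧ ¬ G.Adj w₂ s) := by
  classical
  -- Step A : there is a non-edge with private neighbors on both sides
  have stepA : ∃ u v : V, u ≠ v ∧ ¬ G.Adj u v ∧
      (∃ a, G.Adj u a ∧ ¬ G.Adj v a) ∧ (∃ b, G.Adj v b ∧ ¬ G.Adj u b) := by
    by_contra hA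
    push_neg at hA
    have nested : ∀ u v : V, u ≠ v → ¬ G.Adj u v →
        (∀ a, G.Adj u a → G.Adj v a) ∨ (∀ b, G.Adj v b → G.Adj u b) := by
      intro u v h1 h2
      by_cases hc : ∃ a, G.Adj u a ∧ ¬ G.Adj v a
      · right
        exact hA u v h1 h2 hc
      · left
        push_neg at hc
        exact hc
    have hNE : Nonempty V := Fintype.card_pos_iff.mp (by omega)
    obtain ⟨u₀, -, hu₀⟩ := Finset.exists_min_image Finset.univ (fun x => G.degree x)
      ⟨Classical.arbitrary V, Finset.mem_univ _⟩
    obtain ⟨x₀, y₀, hxy, hnxy⟩ := hne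
    -- u₀ has a non-neighbor
    have hu₀non : ∃ v, u₀ ≠ v ∧ ¬ G.Adj u₀ v := by
      by_contra h
      push_neg at h
      have hdeg : G.degree u₀ = Fintype.card V - 1 := by
        have : G.neighborFinset u₀ = Finset.univ.erase u₀ := by
          ext w
          simp only [mem_neighborFinset, Finset.mem_erase, Finset.mem_univ, and_true]
          constructor
          · exact fun hw => (G.ne_of_adj hw).symm
          · exact fun hw => h w (Ne.symm hw)
        rw [← card_neighborFinset_eq_degree, this, Finset.card_erase_of_mem (Finset.mem_univ _),
          Finset.card_univ]
      have hsub : G.neighborFinset x₀ ⊆ (Finset.univ.erase y₀).erase x₀ := by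
        intro w hw
        rw [mem_neighborFinset] at hw
        refine Finset.mem_erase.mpr ⟨(G.ne_of_adj hw).symm, Finset.mem_erase.mpr ⟨?_, Finset.mem_univ _⟩⟩
        intro hwy
        exact hnxy (hwy ▸ hw)
      have hcard : G.degree x₀ ≤ Fintype.card V - 2 := by
        have h2 := Finset.card_le_card hsub
        rw [← card_neighborFinset_eq_degree]
        have : ((Finset.univ.erase y₀).erase x₀).card = Fintype.card V - 2 := by
          rw [Finset.card_erase_of_mem (Finset.mem_erase.mpr ⟨hxy, Finset.mem_univ _⟩),
            Finset.card_erase_of_mem (Finset.mem_univ _), Finset.card_univ]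
          omega
        omega
      have := hu₀ x₀ (Finset.mem_univ _)
      omega
    obtain ⟨v₀, hne₀, hna₀⟩ := hu₀non
    -- WLOG : N(u₀) ⊆ N(v₀)
    have hsub : ∀ a, G.Adj u₀ a → G.Adj v₀ a := by
      rcases nested u₀ v₀ hne₀ hna₀ with h | h
      · exact h
      · have hsub' : G.neighborFinset v₀ ⊆ G.neighborFinset u₀ := by
          intro w hw
          rw [mem_neighborFinset] at hw ⊢
          exact h w hw
        have hdle : G.degree u₀ ≤ G.degree v₀ := by
          have := hu₀ v₀ (Finset.mem_univ _); simpa using this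
        have heq : G.neighborFinset v₀ = G.neighborFinset u₀ :=
          Finset.eq_of_subset_of_card_le hsub' (by
            rw [card_neighborFinset_eq_degree, card_neighborFinset_eq_degree]; exact hdle)
        intro a ha
        have : a ∈ G.neighborFinset u₀ := (mem_neighborFinset _ _ _).mpr ha
        rw [← heq, mem_neighborFinset] at this
        exact this
    obtain ⟨c, hc1, hc2⟩ := F1 hne₀ hna₀
    obtain ⟨z, hz1, hz2, hz3, hz4⟩ := F2 hc1
    rcases nested u₀ z (Ne.symm hz1) hz3 with h | h
    · exact hz4 ((h c hc1).symm)
    · -- N(z) ⊆ N(u₀) and minimality force N(z) = N(u₀) ∋ c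
      have hsub' : G.neighborFinset z ⊆ G.neighborFinset u₀ := by
        intro w hw
        rw [mem_neighborFinset] at hw ⊢
        exact h w hw
      have hdle : G.degree u₀ ≤ G.degree z := by
        have := hu₀ z (Finset.mem_univ _); simpa using this
      have heq : G.neighborFinset z = G.neighborFinset u₀ :=
        Finset.eq_of_subset_of_card_le hsub' (by
          rw [card_neighborFinset_eq_degree, card_neighborFinset_eq_degree]; exact hdle)
      have : c ∈ G.neighborFinset z := by
        rw [heq, mem_neighborFinset]; exact hc1
      rw [mem_neighborFinset] at this
      exact hz4 this.symm
  -- Main chain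
  obtain ⟨u, v, huv, hnuv, ⟨a₀, ha₀1, ha₀2⟩, ⟨b₀, hb₀1, hb₀2⟩⟩ := stepA
  obtain ⟨c, hcu, hcv⟩ := F1 huv hnuv
  by_cases hR : ∃ x, x ≠ u ∧ x ≠ v ∧ ¬ G.Adj u x ∧ ¬ G.Adj v x
  · obtain ⟨x, hx1, hx2, hx3, hx4⟩ := hR
    exact ⟨u, v, c, a₀, b₀, x,
      ⟨(G.ne_of_adj hcu).symm, (G.ne_of_adj hcv).symm, hcu, hcv⟩,
      ⟨fun h => hnuv (h ▸ ha₀1), ha₀1, ha₀2⟩,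
      ⟨fun h => hnuv ((h ▸ hb₀1) : G.Adj v u).symm, hb₀1, hb₀2⟩,
      ⟨hx1, hx2, hx3, hx4⟩⟩
  push_neg at hR
  -- hR : ∀ x, x ≠ u → x ≠ v → ¬Adj u x → Adj v x
  obtain ⟨b, hb1, hb2, hb3, hb4⟩ := F2 hcu
  have hbv : G.Adj v b := by
    have hbnv : b ≠ v := fun h => hb4 (by rw [h]; exact hcv.symm)
    exact hR b hb1 hbnv hb3
  obtain ⟨a, ha1, ha2, ha3, ha4⟩ := F2 hcv
  have hau : G.Adj u a := by
    have hanu : a ≠ u := fun h => ha4 (by rw [h]; exact hcu.symm)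
    by_contra hua
    exact ha3 (hR a hanu ha1 hua)
  by_cases hab : G.Adj a b
  · by_cases hy : ∃ y, G.Adj a y ∧ G.Adj b y
    · obtain ⟨y, hy1, hy2⟩ := hy
      obtain ⟨t, ht1, ht2, ht3, ht4⟩ := F2 hab
      exact ⟨a, b, y, u, v, t,
        ⟨(G.ne_of_adj hy1).symm, (G.ne_of_adj hy2).symm, hy1, hy2⟩,
        ⟨Ne.symm hb1, hau.symm, fun h => hb3 h.symm⟩,
        ⟨Ne.symm ha1, hbv.symm, fun h => ha3 h.symm⟩,
        ⟨ht1, ht2, ht3, ht4⟩⟩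
    · push_neg at hy
      by_cases hRac : ∃ x, x ≠ a ∧ x ≠ c ∧ ¬ G.Adj a x ∧ ¬ G.Adj c x
      · obtain ⟨x, hx1, hx2, hx3, hx4⟩ := hRac
        exact ⟨a, c, u, b, v, x,
          ⟨G.ne_of_adj hau, G.ne_of_adj hcu, hau.symm, hcu.symm⟩,
          ⟨hb2, hab, hb4⟩,
          ⟨Ne.symm ha1, hcv.symm, fun h => ha3 h.symm⟩,
          ⟨hx1, hx2, hx3, hx4⟩⟩
      · by_cases hRbc : ∃ x, x ≠ b ∧ x ≠ c ∧ ¬ G.Adj b x ∧ ¬ G.Adj c x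
        · obtain ⟨x, hx1, hx2, hx3, hx4⟩ := hRbc
          exact ⟨b, c, v, a, u, x,
            ⟨G.ne_of_adj hbv, G.ne_of_adj hcv, hbv.symm, hcv.symm⟩,
            ⟨ha2, hab.symm, ha4⟩,
            ⟨Ne.symm hb1, hcu.symm, fun h => hb3 h.symm⟩,
            ⟨hx1, hx2, hx3, hx4⟩⟩
        · push_neg at hRac hRbc
          have hGc : ∀ y, y ≠ a → y ≠ b → y ≠ c → G.Adj c y := by
            intro y h1 h2 h3
            by_contra hyc
            have hya : G.Adj a y := by
              by_contra h'
              exact hyc (hRac y h1 h3 h')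
            have hyb : G.Adj b y := by
              by_contra h'
              exact hyc (hRbc y h2 h3 h')
            exact hy y hya hyb
          have hex : ∃ y, y ∉ ({u, v, a, b, c} : Finset V) := by
            have hcard : ({u, v, a, b, c} : Finset V).card ≤ 5 := by
              have h1 := Finset.card_insert_le u ({v, a, b, c} : Finset V)
              have h2 := Finset.card_insert_le v ({a, b, c} : Finset V)
              have h3 := Finset.card_insert_le a ({b, c} : Finset V)
              have h4 := Finset.card_insert_le b ({c} : Finset V)
              have h5 : ({c} : Finset V).card = 1 := Finset.card_singleton c
              omega
            have hpos : (({u, v, a, b, c} : Finset V)ᶜ).Nonempty := by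
              rw [← Finset.card_pos, Finset.card_compl]
              omega
            obtain ⟨y, hy'⟩ := hpos
            exact ⟨y, Finset.mem_compl.mp hy'⟩
          obtain ⟨y, hy'⟩ := hex
          simp only [Finset.mem_insert, Finset.mem_singleton, not_or] at hy'
          obtain ⟨hyu, hyv, hya, hyb, hyc⟩ := hy'
          have hcy : G.Adj c y := hGc y hya hyb hyc
          by_cases huy : G.Adj u y
          · exact ⟨u, c, y, a, v, b,
              ⟨hyu, hyc, huy, hcy⟩,
              ⟨ha2, hau, ha4⟩,
              ⟨Ne.symm huv, hcv.symm, hnuv⟩,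
              ⟨hb1, hb2, hb3, hb4⟩⟩
          · have hvy : G.Adj v y := hR y hyu hyv huy
            exact ⟨v, c, y, b, u, a,
              ⟨hyv, hyc, hvy, hcy⟩,
              ⟨hb2, hbv, hb4⟩,
              ⟨huv, hcu.symm, fun h => hnuv h.symm⟩,
              ⟨ha1, ha2, ha3, ha4⟩⟩
  · have hanb : a ≠ b := fun h => hb3 (h ▸ hau)
    obtain ⟨w, hw1, hw2⟩ := F1 hanb hab
    exact ⟨a, b, w, u, v, c,
      ⟨(G.ne_of_adj hw1).symm, (G.ne_of_adj hw2).symm, hw1, hw2⟩,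
      ⟨Ne.symm hb1, hau.symm, fun h => hb3 h.symm⟩,
      ⟨Ne.symm ha1, hbv.symm, fun h => ha3 h.symm⟩,
      ⟨Ne.symm ha2, Ne.symm hb2, fun h => ha4 h.symm, fun h => hb4 h.symm⟩⟩

/-- Every doubly-connected graph of order `n ≥ 6` such that both `G` and `Ḡ` have
diameter `2` contains a locating set of cardinality `n - 4`. -/
theorem exists_locating_set_card_sub_four {V : Type*} [Fintype V] (G : SimpleGraph V)
    (hn : 6 ≤ Fintype.card V) (hG : G.Connected) (hGc : Gᶜ.Connected)
    (hd : G.ediam = 2) (hdc : Gᶜ.ediam = 2) :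
    ∃ S : Set V, IsLocatingSet G S ∧ S.ncard = Fintype.card V - 4 := by
  classical
  have hNE : Nonempty V := Fintype.card_pos_iff.mp (by omega)
  have F1 : ∀ ⦃u v : V⦄, u ≠ v → ¬ G.Adj u v → ∃ w, G.Adj u w ∧ G.Adj v w :=
    fun u v h1 h2 => exists_common_nbr_of_ediam_two G hd h1 h2
  have F2 : ∀ ⦃u v : V⦄, G.Adj u v → ∃ w, w ≠ u ∧ w ≠ v ∧ ¬ G.Adj u w ∧ ¬ G.Adj v w := by
    intro u v h
    have h1 : ¬ Gᶜ.Adj u v := by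
      rw [compl_adj]
      push_neg
      intro _
      exact h
    obtain ⟨w, hw1, hw2⟩ := exists_common_nbr_of_ediam_two Gᶜ hdc (G.ne_of_adj h) h1
    rw [compl_adj] at hw1 hw2
    exact ⟨w, Ne.symm hw1.1, Ne.symm hw2.1, hw1.2, hw2.2⟩
  have hnonedge : ∃ u v : V, u ≠ v ∧ ¬ G.Adj u v := by
    obtain ⟨u, v, huv⟩ := exists_edist_eq_ediam_of_finite (G := G)
    rw [hd] at huv
    have h0 : u ≠ v := by
      intro h
      rw [h, edist_self] at huv
      simp at huv
    have h1 : ¬ G.Adj u v := by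
      intro h
      rw [edist_eq_one_iff_adj.mpr h] at huv
      simp at huv
    exact ⟨u, v, h0, h1⟩
  obtain ⟨w₁, w₂, p, q, r, s, ⟨hp1, hp2, hp3, hp4⟩, ⟨hq2', hq3, hq4⟩, ⟨hr1', hr3, hr4⟩,
    ⟨hs1, hs2, hs3, hs4⟩⟩ := exists_cell_pair G F1 F2 hnonedge hn
  have hq1' : q ≠ w₁ := fun h => G.irrefl (h ▸ hq3)
  have hr2' : r ≠ w₂ := fun h => G.irrefl (h ▸ hr3)
  -- pairwise distinctness of p,q,r,s
  have hpq : p ≠ q := fun h => hq4 (h ▸ hp4)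
  have hpr : p ≠ r := fun h => hr4 (h ▸ hp3)
  have hps : p ≠ s := fun h => hs3 (h ▸ hp3)
  have hqr : q ≠ r := fun h => hr4 (h ▸ hq3)
  have hqs : q ≠ s := fun h => hs3 (h ▸ hq3)
  have hrs : r ≠ s := fun h => hs4 (h ▸ hr3)
  set T : Set V := {p, q, r, s} with hT
  have hw1T : w₁ ∈ Tᶜ := by
    simp only [hT, Set.mem_compl_iff, Set.mem_insert_iff, Set.mem_singleton_iff, not_or]
    exact ⟨Ne.symm hp1, Ne.symm hq1', fun h => hr1' h.symm, fun h => hs1 h.symm⟩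
  have hw2T : w₂ ∈ Tᶜ := by
    simp only [hT, Set.mem_compl_iff, Set.mem_insert_iff, Set.mem_singleton_iff, not_or]
    exact ⟨Ne.symm hp2, fun h => hq2' h.symm, Ne.symm hr2', fun h => hs2 h.symm⟩
  -- helper to distinguish using a witness
  have key : ∀ {x y w : V}, w ∈ Tᶜ → G.Adj w x → ¬ G.Adj w y →
      ∃ z ∈ Tᶜ, G.edist x z ≠ G.edist y z := by
    intro x y w hw h1 h2
    refine ⟨w, hw, ?_⟩
    intro heq
    rw [edist_eq_one_iff_adj.mpr h1.symm] at heq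
    exact h2 (edist_eq_one_iff_adj.mp heq.symm).symm
  have key' : ∀ {x y w : V}, w ∈ Tᶜ → ¬ G.Adj w x → G.Adj w y →
      ∃ z ∈ Tᶜ, G.edist x z ≠ G.edist y z := by
    intro x y w hw h1 h2
    obtain ⟨z, hz, hne⟩ := key hw h2 h1
    exact ⟨z, hz, hne.symm⟩
  refine ⟨Tᶜ, ⟨?_, ?_⟩, ?_⟩
  · intro v _
    exact ⟨w₁, hw1T, edist_ne_top_iff_reachable.mpr (hG.preconnected v w₁)⟩
  · intro x y hxy
    by_cases hx : x ∈ Tᶜ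
    · refine ⟨x, hx, ?_⟩
      rw [edist_self]
      intro h
      exact hxy (edist_eq_zero_iff.mp h.symm).symm
    by_cases hy : y ∈ Tᶜ
    · refine ⟨y, hy, ?_⟩
      rw [edist_self]
      intro h
      exact hxy (edist_eq_zero_iff.mp h)
    rw [Set.notMem_compl_iff] at hx hy
    simp only [hT, Set.mem_insert_iff, Set.mem_singleton_iff] at hx hy
    rcases hx with rfl | rfl | rfl | rfl <;> rcases hy with rfl | rfl | rfl | rfl
    · exact absurd rfl hxy
    · exact key hw2T hp4 hq4
    · exact key hw1T hp3 hr4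
    · exact key hw1T hp3 hs3
    · exact key' hw2T hq4 hp4
    · exact absurd rfl hxy
    · exact key hw1T hq3 hr4
    · exact key hw1T hq3 hs3
    · exact key' hw1T hr4 hp3
    · exact key' hw1T hr4 hq3
    · exact absurd rfl hxy
    · exact key hw2T hr3 hs4
    · exact key' hw1T hs3 hp3
    · exact key' hw1T hs3 hq3
    · exact key' hw2T hs4 hr3
    · exact absurd rfl hxy
  · have hT4 : T.ncard = 4 := by
      rw [hT]
      rw [Set.ncard_insert_of_notMem (by simp [hpq, hpr, hps]),
        Set.ncard_insert_of_notMem (by simp [hqr, hqs]),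
        Set.ncard_insert_of_notMem (by simp [hrs]),
        Set.ncard_singleton]
    have hsum := Set.ncard_add_ncard_compl T
    rw [hT4, Nat.card_eq_fintype_card] at hsum
    omega
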